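/- Let R be a nontrivial ring (with identity) having no zero divisors, and let G be a left-orderable group. Then the group ring R[G] has no zero divisors, and every unit of R[G] is trivial: if u ∈ R[G] is invertible then u = r·g for some unit r of R and some g ∈ G (i.e. u is supported on a single group element with invertible coefficient). -/

import Mathlib

/-- A group is left-orderable if it admits a strict linear order invariant under
left multiplication. -/
def LeftOrderable (G : Type*) [Group G] : Prop :=
  ∃ r : G → G → Prop, IsStrictTotalOrder G r ∧ ∀ f g h : G, r g h → r (f * g) (f * h)

/-- In a group with two unique products, if a product of two elements of the group
ring over a domain is `1`, both factors have singleton support. -/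
lemma support_card_eq_one_of_mul_eq_one
    {R : Type*} [Ring R] [Nontrivial R] [NoZeroDivisors R]
    {G : Type*} [Group G] [TwoUniqueProds G]
    {f g : MonoidAlgebra R G} (h : f * g = 1) :
    f.coeff.support.card = 1 ∧ g.coeff.support.card = 1 := by
  classical
  have hf : f ≠ 0 := by rintro rfl; rw [zero_mul] at h; exact one_ne_zero h.symm
  have hg : g ≠ 0 := by rintro rfl; rw [mul_zero] at h; exact one_ne_zero h.symm
  have hfc : 1 ≤ f.coeff.support.card := Finset.card_pos.mpr (Finsupp.support_nonempty_iff.mpr (mt MonoidAlgebra.coeff_eq_zero.mp hf))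
  have hgc : 1 ≤ g.coeff.support.card := Finset.card_pos.mpr (Finsupp.support_nonempty_iff.mpr (mt MonoidAlgebra.coeff_eq_zero.mp hg))
  have hle : f.coeff.support.card * g.coeff.support.card ≤ 1 := by
    by_contra hlt
    push_neg at hlt
    obtain ⟨p1, hp1, p2, hp2, hne, hu1, hu2⟩ :=
      TwoUniqueProds.uniqueMul_of_one_lt_card hlt
    rw [Finset.mem_product] at hp1 hp2
    have h1 : (f * g).coeff (p1.1 * p1.2) ≠ 0 := by
      rw [MonoidAlgebra.mul_apply_mul_eq_mul_of_uniqueMul hu1]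
      exact mul_ne_zero (Finsupp.mem_support_iff.mp hp1.1) (Finsupp.mem_support_iff.mp hp1.2)
    have h2 : (f * g).coeff (p2.1 * p2.2) ≠ 0 := by
      rw [MonoidAlgebra.mul_apply_mul_eq_mul_of_uniqueMul hu2]
      exact mul_ne_zero (Finsupp.mem_support_iff.mp hp2.1) (Finsupp.mem_support_iff.mp hp2.2)
    have hne' : p1.1 * p1.2 ≠ p2.1 * p2.2 := by
      intro he
      exact hne (Prod.ext ((hu1 hp2.1 hp2.2 he.symm).1.symm)
        ((hu1 hp2.1 hp2.2 he.symm).2.symm))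
    rw [h] at h1 h2
    rw [MonoidAlgebra.one_def, MonoidAlgebra.coeff_single] at h1 h2
    rw [Finsupp.single_apply_ne_zero] at h1 h2
    exact hne' (h1.1.symm ▸ h2.1.symm ▸ rfl)
  constructor <;> nlinarith

/-- If `R` is a nontrivial ring without zero divisors and `G` is a
left-orderable group, then the group ring `R[G]` has no zero divisors and all
of its units are trivial, i.e. of the form `r·g` with `r` a unit of `R`. -/
theorem groupRing_no_zeroDivisors_and_trivial_units
    {R : Type*} [Ring R] [Nontrivial R] [NoZeroDivisors R]
    {G : Type*} [Group G] (hG : LeftOrderable G) :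
    (∀ x y : MonoidAlgebra R G, x * y = 0 → x = 0 ∨ y = 0) ∧
      ∀ u : (MonoidAlgebra R G)ˣ, ∃ (r : Rˣ) (g : G),
        (u : MonoidAlgebra R G) = MonoidAlgebra.single g (r : R) := by
  classical
  obtain ⟨rel, hsto, hcov⟩ := hG
  letI := hsto
  letI : LinearOrder G := linearOrderOfSTO rel
  haveI : MulLeftStrictMono G := ⟨fun f {g h} hgh => hcov f g h hgh⟩
  haveI : TwoUniqueProds G := TwoUniqueProds.of_covariant_right
  refine ⟨fun x y h => mul_eq_zero.mp h, fun u => ?_⟩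
  obtain ⟨h1, h2⟩ := support_card_eq_one_of_mul_eq_one u.val_inv
  obtain ⟨g, r, hr, hu0⟩ := Finsupp.card_support_eq_one'.mp h1
  have hu : (u : MonoidAlgebra R G) = MonoidAlgebra.single g r := MonoidAlgebra.coeff_injective hu0
  obtain ⟨g', s, hs, hv0⟩ := Finsupp.card_support_eq_one'.mp h2
  have hv : u.inv = MonoidAlgebra.single g' s := MonoidAlgebra.coeff_injective hv0
  rw [Units.inv_eq_val_inv] at hv
  have huv : (u : MonoidAlgebra R G) * (↑u⁻¹ : MonoidAlgebra R G) = 1 := u.val_inv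
  have hvu : (↑u⁻¹ : MonoidAlgebra R G) * (u : MonoidAlgebra R G) = 1 := u.inv_val
  rw [hu, hv, MonoidAlgebra.single_mul_single, MonoidAlgebra.one_def] at huv hvu
  rcases MonoidAlgebra.single_inj.mp huv with ⟨-, hrs⟩ | ⟨h0, -⟩
  · rcases MonoidAlgebra.single_inj.mp hvu with ⟨-, hsr⟩ | ⟨h0, -⟩
    · exact ⟨⟨r, s, hrs, hsr⟩, g, hu⟩
    · exact absurd h0 (mul_ne_zero hs hr)
  · exact absurd h0 (mul_ne_zero hr hs)
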